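/- Let q be a prime power, m ≥ 1, {β₁,…,β_m} and {γ₁,…,γ_m} two bases of GF(q^m) over GF(q), A an m×m nonsingular matrix over GF(q), and f₁,…,f_m polynomials over GF(q). Define F(z) = γ₁f₁(x₁)+…+γ_m f_m(x_m), where (x₁,…,x_m)=(z₁,…,z_m)A and z = β₁z₁+…+β_m z_m. Then F is a permutation of GF(q^m) if and only if every f_i is a permutation polynomial of GF(q). -/

import Mathlib

open Polynomial

theorem pi_bij_iff {F : Type*} [Field F] [Finite F] {m : ℕ} (h : Fin m → F → F) :
    Function.Bijective (fun v : Fin m → F => fun i => h i (v i)) ↔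
      ∀ i, Function.Bijective (h i) := by
  constructor
  · intro hb i
    have hinj : Function.Injective (h i) := by
      intro a b hab
      have : (Function.update (fun _ : Fin m => (0:F)) i a) =
          (Function.update (fun _ : Fin m => (0:F)) i b) := by
        apply hb.injective
        funext j
        by_cases hj : j = i
        · subst hj; simp [hab]
        · simp [Function.update_of_ne hj]
      have := congrFun this i
      simpa using this
    exact hinj.bijective_of_finite
  · intro hi
    exact (Equiv.piCongrRight (fun i => Equiv.ofBijective (h i) (hi i))).bijective

/-- PPs over GF(q^m) from PPs over GF(q) via bases and a nonsingular matrix. -/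
theorem stmt_0 {F E : Type*} [Field F] [Fintype F] [Field E] [Algebra F E]
    (m : ℕ) (hm : 1 ≤ m)
    (Bβ Bγ : Module.Basis (Fin m) F E)
    (A : Matrix (Fin m) (Fin m) F) (hA : IsUnit A.det)
    (f : Fin m → Polynomial F) :
    Function.Bijective (fun z : E =>
      ∑ i, ((f i).eval (Matrix.vecMul (fun j => Bβ.repr z j) A i)) • Bγ i)
      ↔ ∀ i, Function.Bijective (fun x : F => (f i).eval x) := by
  set g : (Fin m → F) → (Fin m → F) := fun v => fun i => (f i).eval (v i) with hg
  have key : (fun z : E =>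
      ∑ i, ((f i).eval (Matrix.vecMul (fun j => Bβ.repr z j) A i)) • Bγ i)
      = ⇑Bγ.equivFun.symm ∘ g ∘ (fun v : Fin m → F => Matrix.vecMul v A) ∘
        (fun z : E => fun j => Bβ.repr z j) := by
    funext z
    simp [Module.Basis.equivFun_symm_apply, hg, Function.comp]
  have hvm : Function.Bijective (fun v : Fin m → F => Matrix.vecMul v A) := by
    refine Function.bijective_iff_has_inverse.mpr
      ⟨fun v => Matrix.vecMul v A⁻¹, fun v => ?_, fun v => ?_⟩
    · simp [Matrix.vecMul_vecMul, Matrix.mul_nonsing_inv A hA]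
    · simp [Matrix.vecMul_vecMul, Matrix.nonsing_inv_mul A hA]
  have hβ : Function.Bijective (fun z : E => fun j => Bβ.repr z j) := by
    have : (fun z : E => fun j => Bβ.repr z j) = ⇑Bβ.equivFun := by
      funext z; simp [Module.Basis.equivFun_apply]
    rw [this]; exact Bβ.equivFun.bijective
  rw [key]
  rw [Function.Bijective.of_comp_iff' Bγ.equivFun.symm.bijective]
  rw [← Function.comp_assoc]
  rw [Function.Bijective.of_comp_iff _ hβ]
  rw [Function.Bijective.of_comp_iff _ hvm]
  exact pi_bij_iff (fun i x => (f i).eval x)
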